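/- The simultaneous first-order conditions 2φ x_k + φ(Σ_{k'≠k}(x_{k'} − s_{k'}) + l_N + l_Q − 2 s_k) + δ − a = 0 for k ∈ {1,…,n} have exactly one solution x ∈ ℝⁿ, namely x_k = s_k + γ with γ = (n+1)⁻¹(φ⁻¹(a − δ) − l_N − l_Q). -/

import Mathlib

open Finset

/-- The simultaneous first-order conditions
`2 φ x_k + φ(Σ_{k' ≠ k}(x_{k'} − s_{k'}) + l_N + l_Q − 2 s_k) + δ − a = 0`
for `k ∈ {1,…,n}` have exactly one solution `x ∈ ℝⁿ`, namely
`x_k = s_k + γ` with `γ = (n+1)⁻¹ (φ⁻¹ (a − δ) − l_N − l_Q)`. -/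
theorem FOC_unique_solution (n : ℕ) (hn : 1 ≤ n) (s : Fin n → ℝ)
    (lN lQ φ δ a : ℝ) (hφ : 0 < φ) (hδ : 0 < δ) :
    ∀ x : Fin n → ℝ,
      (∀ k : Fin n,
        2 * φ * x k
          + (φ * ((∑ k' ∈ Finset.univ.erase k, (x k' - s k')) + lN + lQ - 2 * s k) + δ - a)
          = 0)
      ↔ x = fun k => s k + ((n : ℝ) + 1)⁻¹ * (φ⁻¹ * (a - δ) - lN - lQ) := by
  have hφ' : φ ≠ 0 := hφ.ne'
  have hn1 : ((n : ℝ) + 1) ≠ 0 := by positivity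
  set c : ℝ := φ⁻¹ * (a - δ) - lN - lQ with hc
  intro x
  constructor
  · intro h
    set T := ∑ k' : Fin n, (x k' - s k') with hT
    have key : ∀ k, x k - s k = c - T := by
      intro k
      have hk := h k
      have hsum : ∑ k' ∈ univ.erase k, (x k' - s k')
          = T - (x k - s k) := by
        rw [hT, Finset.sum_erase_eq_sub (mem_univ k)]
      rw [hsum] at hk
      have : φ * (x k - s k) = φ * c - φ * T := by
        rw [hc]; field_simp; ring_nf; ring_nf at hk; linarith
      have := mul_left_cancel₀ hφ' (by linarith [this] : φ * (x k - s k) = φ * (c - T))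
      linarith [this]
    have hTsum : T = n * (c - T) := by
      calc T = ∑ k' : Fin n, (c - T) := Finset.sum_congr rfl (fun k _ => key k)
      _ = n * (c - T) := by simp [Finset.card_univ, mul_comm]; ring
    have hTval : T = n * c / (n + 1) := by
      field_simp
      linarith
    funext k
    have hk := key k
    rw [hTval] at hk
    show x k = s k + ((n : ℝ) + 1)⁻¹ * c
    field_simp at hk ⊢
    linarith
  · intro h
    subst h
    intro k
    have hcard : (univ.erase k).card = n - 1 := by
      simp [Finset.card_univ]
    have hsum : ∑ k' ∈ univ.erase k,
        ((s k' + ((n : ℝ) + 1)⁻¹ * c) - s k')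
        = ((n : ℝ) - 1) * (((n : ℝ) + 1)⁻¹ * c) := by
      simp only [add_sub_cancel_left]
      rw [Finset.sum_const, hcard, nsmul_eq_mul]
      have : ((n - 1 : ℕ) : ℝ) = (n : ℝ) - 1 := by
        have := Nat.cast_sub hn (R := ℝ)
        simpa using this
      rw [this]
    simp only [hsum]
    rw [hc]
    field_simp
    ring
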